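/- For any ideal I of a commutative ring A, the real radical √[R]{I} equals the intersection of all real prime ideals of A containing I (where this intersection is understood to be A itself if no real prime ideal contains I). -/

import Mathlib

/-- An ideal `J` of a commutative ring is *real* if whenever a finite sum of squares
`∑ i, a i ^ 2` lies in `J`, each `a i` lies in `J`. -/
def IsRealIdeal {A : Type*} [CommRing A] (J : Ideal A) : Prop :=
  ∀ (n : ℕ) (a : Fin n → A), (∑ i, a i ^ 2) ∈ J → ∀ i, a i ∈ J

/-- The real Zariski spectrum: the set of real prime ideals of `A`. -/
structure RealSpectrum (A : Type*) [CommRing A] where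
  asIdeal : Ideal A
  isPrime : asIdeal.IsPrime
  isReal : IsRealIdeal asIdeal

namespace RealSpectrum

variable {A : Type*} [CommRing A]

instance (p : RealSpectrum A) : p.asIdeal.IsPrime := p.isPrime

/-- `V(I)`: the set of real prime ideals containing `I`. -/
def zeroLocus (I : Ideal A) : Set (RealSpectrum A) := {p | I ≤ p.asIdeal}

/-- `D(f)`: the set of real prime ideals not containing `f`. -/
def basicOpen (f : A) : Set (RealSpectrum A) := {p | f ∉ p.asIdeal}

end RealSpectrum

/-- The real radical of an ideal `I`:
`√[R]{I} = { a : ∃ m n (b : Fin n → A), a ^ (2 * m) + ∑ i, b i ^ 2 ∈ I }`. -/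
def realRadical {A : Type*} [CommRing A] (I : Ideal A) : Set A :=
  {a | ∃ (m n : ℕ) (b : Fin n → A), a ^ (2 * m) + ∑ i, b i ^ 2 ∈ I}

section AuxSumSq

variable {A : Type*} [CommRing A]

lemma isSumSq_sq_mul' {s : A} (hs : IsSumSq s) (c : A) : IsSumSq (c ^ 2 * s) := by
  induction hs with
  | zero => simpa using IsSumSq.zero
  | @sq_add a S pS ih =>
    have h : c ^ 2 * (a * a + S) = (c * a) * (c * a) + c ^ 2 * S := by ring
    rw [h]; exact IsSumSq.sq_add _ ih

lemma isSumSq_pow_mul' {s : A} (hs : IsSumSq s) (a : A) (m : ℕ) :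
    IsSumSq (a ^ (2 * m) * s) := by
  have h : a ^ (2 * m) = (a ^ m) ^ 2 := by ring
  rw [h]; exact isSumSq_sq_mul' hs _

lemma isSumSq_mul' {s t : A} (hs : IsSumSq s) (ht : IsSumSq t) : IsSumSq (s * t) := by
  induction hs with
  | zero => simpa using IsSumSq.zero
  | @sq_add a S pS ih =>
    have h : (a * a + S) * t = a ^ 2 * t + S * t := by ring
    rw [h]; exact (isSumSq_sq_mul' ht a).add ih

lemma isSumSq_sum_sq' {ι : Type*} (s : Finset ι) (f : ι → A) : IsSumSq (∑ i ∈ s, f i ^ 2) := by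
  simpa [pow_two] using isSumSq_sum_mul_self s f

lemma IsSumSq.exists_fin' {s : A} (hs : IsSumSq s) :
    ∃ (n : ℕ) (b : Fin n → A), s = ∑ i, b i ^ 2 := by
  induction hs with
  | zero => exact ⟨0, ![], by simp⟩
  | @sq_add a S pS ih =>
    obtain ⟨n, b, rfl⟩ := ih
    exact ⟨n + 1, Fin.cons a b, by simp [Fin.sum_univ_succ, pow_two]⟩

end AuxSumSq

open RealSpectrum in
/-- The real radical of `I` is the intersection of all real prime ideals containing `I`
(the empty intersection being `A` itself). -/
theorem realRadical_eq_iInter {A : Type*} [CommRing A] (I : Ideal A) :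
    realRadical I = ⋂ p ∈ zeroLocus I, ((RealSpectrum.asIdeal p : Ideal A) : Set A) := by
  ext a
  simp only [Set.mem_iInter, SetLike.mem_coe]
  constructor
  · rintro ⟨m, n, b, hI⟩ p hp
    have hmem : (∑ i : Fin (n + 1), Fin.cons (a ^ m) b i ^ 2) ∈ p.asIdeal := by
      have h : (∑ i : Fin (n + 1), Fin.cons (a ^ m) b i ^ 2)
          = a ^ (2 * m) + ∑ i, b i ^ 2 := by
        simp only [Fin.sum_univ_succ, Fin.cons_zero, Fin.cons_succ]
        ring
      rw [h]; exact hp hI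
    have ham : a ^ m ∈ p.asIdeal := by
      simpa using p.isReal (n + 1) _ hmem 0
    exact p.isPrime.mem_of_pow_mem m ham
  · intro h
    by_contra hA
    simp only [realRadical, Set.mem_setOf_eq, not_exists] at hA
    -- the multiplicative set of elements `a ^ (2m) + (sum of squares)`
    set M : Set A := {x | ∃ m s, IsSumSq s ∧ x = a ^ (2 * m) + s} with hMdef
    have hMdisjI : ∀ x ∈ M, x ∉ I := by
      rintro x ⟨m, s, hs, rfl⟩ hxI
      obtain ⟨n, b, rfl⟩ := hs.exists_fin'
      exact hA m n b hxI
    have hMmul : ∀ x ∈ M, ∀ y ∈ M, x * y ∈ M := by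
      rintro _ ⟨m, s, hs, rfl⟩ _ ⟨m', s', hs', rfl⟩
      refine ⟨m + m', a ^ (2 * m) * s' + a ^ (2 * m') * s + s * s',
        ((isSumSq_pow_mul' hs' a m).add (isSumSq_pow_mul' hs a m')).add
          (isSumSq_mul' hs hs'), by ring⟩
    set 𝒮 : Set (Ideal A) := {J | I ≤ J ∧ ∀ x ∈ M, x ∉ J} with h𝒮def
    have hI𝒮 : I ∈ 𝒮 := ⟨le_rfl, hMdisjI⟩
    obtain ⟨P, hIP, hPmem, hPmax⟩ :
        ∃ P, I ≤ P ∧ Maximal (· ∈ 𝒮) P := by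
      refine zorn_le_nonempty₀ 𝒮 ?_ I hI𝒮
      intro c hc𝒮 hchain J hJ
      refine ⟨sSup c, ⟨(hc𝒮 hJ).1.trans (le_sSup hJ), ?_⟩, fun z hz => le_sSup hz⟩
      intro x hx hxs
      obtain ⟨K, hKc, hxK⟩ :=
        (Submodule.mem_sSup_of_directed ⟨J, hJ⟩ hchain.directedOn).mp hxs
      exact (hc𝒮 hKc).2 x hx hxK
    -- any ideal strictly containing `P` meets `M`
    have key : ∀ x : A, x ∉ P → ∃ y ∈ M, y ∈ P ⊔ Ideal.span {x} := by
      intro x hx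
      by_contra hcon
      push_neg at hcon
      have hmem : P ⊔ Ideal.span {x} ∈ 𝒮 :=
        ⟨hPmem.1.trans le_sup_left, fun y hy => hcon y hy⟩
      have hle : P ⊔ Ideal.span {x} ≤ P := hPmax hmem le_sup_left
      exact hx (hle (Ideal.mem_sup_right (Ideal.mem_span_singleton_self x)))
    have hone : (1 : A) ∈ M := ⟨0, 0, IsSumSq.zero, by simp⟩
    have hPne : P ≠ ⊤ := by
      intro hTop
      exact hPmem.2 1 hone (hTop ▸ Submodule.mem_top)
    have hPprime : P.IsPrime := by
      rw [Ideal.isPrime_iff]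
      refine ⟨hPne, fun {x y} hxy => ?_⟩
      by_contra hcon
      push_neg at hcon
      obtain ⟨hx, hy⟩ := hcon
      obtain ⟨u, huM, huP⟩ := key x hx
      obtain ⟨v, hvM, hvP⟩ := key y hy
      rw [Submodule.mem_sup] at huP hvP
      obtain ⟨p1, hp1, z1, hz1, rfl⟩ := huP
      obtain ⟨p2, hp2, z2, hz2, rfl⟩ := hvP
      rw [Ideal.mem_span_singleton'] at hz1 hz2
      obtain ⟨r, rfl⟩ := hz1
      obtain ⟨s, rfl⟩ := hz2
      have hprod : (p1 + r * x) * (p2 + s * y) ∈ P := by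
        have hEq : (p1 + r * x) * (p2 + s * y)
            = p1 * (p2 + s * y) + p2 * (r * x) + (r * s) * (x * y) := by ring
        rw [hEq]
        exact add_mem (add_mem (P.mul_mem_right _ hp1) (P.mul_mem_right _ hp2))
          (P.mul_mem_left _ hxy)
      exact hPmem.2 _ (hMmul _ huM _ hvM) hprod
    have hPreal : IsRealIdeal P := by
      intro n c hsum j
      by_contra hcj
      obtain ⟨u, huM, huP⟩ := key (c j) hcj
      obtain ⟨m, s, hs, rfl⟩ := huM
      rw [Submodule.mem_sup] at huP
      obtain ⟨p, hp, z, hz, heq⟩ := huP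
      rw [Ideal.mem_span_singleton'] at hz
      obtain ⟨r, rfl⟩ := hz
      set T := ∑ i ∈ Finset.univ.erase j, c i ^ 2 with hT
      have hsplit : c j ^ 2 + T = ∑ i, c i ^ 2 :=
        Finset.add_sum_erase _ (fun i => c i ^ 2) (Finset.mem_univ j)
      have hmemP : (a ^ (2 * m) + s) ^ 2 + T * r ^ 2 ∈ P := by
        have hEq : (a ^ (2 * m) + s) ^ 2 + T * r ^ 2
            = p * (p + 2 * (r * c j)) + (c j ^ 2 + T) * r ^ 2 := by
          rw [← heq]; ring
        rw [hEq, hsplit]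
        exact add_mem (P.mul_mem_right _ hp) (P.mul_mem_right _ hsum)
      have hmemM : (a ^ (2 * m) + s) ^ 2 + T * r ^ 2 ∈ M := by
        refine ⟨2 * m, a ^ (2 * m) * s + a ^ (2 * m) * s + s * s + r ^ 2 * T,
          (((isSumSq_pow_mul' hs a m).add (isSumSq_pow_mul' hs a m)).add
            (isSumSq_mul' hs hs)).add (isSumSq_sq_mul' (isSumSq_sum_sq' _ c) r), by ring⟩
      exact hPmem.2 _ hmemM hmemP
    have haP : a ∈ P := h ⟨P, hPprime, hPreal⟩ hPmem.1
    have haM : a ^ (2 * 1) + 0 ∈ M := ⟨1, 0, IsSumSq.zero, rfl⟩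
    refine hPmem.2 _ haM ?_
    rw [add_zero]
    have hsq : a ^ (2 * 1) = a * a := by ring
    rw [hsq]
    exact P.mul_mem_left a haP
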